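/- Suppose Λ_{P₂}(f₁,f₂,f₃) ≤ C λ^{(d/2)(1-1/p₁-1/p₂-1/p₃)} ‖f₁‖_{p₁}‖f₂‖_{p₂}‖f₃‖_{p₃} holds for all nonnegative f₁,f₂,f₃ on ℤ^d and all sufficiently large admissible λ, and suppose N_λ ≥ c λ^{(d-2)/2} for a constant c > 0. Then necessarily (2/d)(1/p₁ + 1/p₃) + 1/p₂ ≤ 1. -/

import Mathlib

open MeasureTheory ENNReal

noncomputable section

/-- The sphere `{y ∈ ℤ^d : |y|² = λ}`. -/
def sph (d lam : ℕ) : Set (Fin d → ℤ) := {y | (∑ i, (y i) ^ 2) = (lam : ℤ)}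

/-- The indicator function of the sphere `S_λ`. -/
def sphInd (d lam : ℕ) (x : Fin d → ℤ) : ℝ := if (∑ i, (x i) ^ 2) = (lam : ℤ) then 1 else 0

/-- `N_λ`, the number of lattice points on the sphere. -/
def Nlam (d lam : ℕ) : ℕ := (sph d lam).ncard

/-- The discrete spherical averaging operator. -/
def Aavg (d lam : ℕ) (f : (Fin d → ℤ) → ℝ) (x : Fin d → ℤ) : ℝ :=
  ((Nlam d lam : ℝ))⁻¹ * ∑' y, sphInd d lam y * f (x - y)

/-- The trilinear 2-chain form `Λ_{P₂}`, valued in `ℝ≥0∞`. -/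
def ΛP₂e (d lam : ℕ) (f₁ f₂ f₃ : (Fin d → ℤ) → ℝ) : ℝ≥0∞ :=
  (ENNReal.ofReal ((Nlam d lam : ℝ) ^ 2))⁻¹ *
    ∑' x₁, ∑' x₂, ∑' x₃,
      ENNReal.ofReal (f₁ x₁) * ENNReal.ofReal (f₂ x₂) * ENNReal.ofReal (f₃ x₃) *
        ENNReal.ofReal (sphInd d lam (x₁ - x₂)) * ENNReal.ofReal (sphInd d lam (x₂ - x₃))

/- ### Auxiliary lemmas -/

lemma sphInd_eq_indicator (d lam : ℕ) :
    sphInd d lam = (sph d lam).indicator (fun _ => (1:ℝ)) := by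
  funext x
  simp only [sphInd, Set.indicator_apply, sph, Set.mem_setOf_eq]

lemma sphInd_nonneg (d lam : ℕ) (x : Fin d → ℤ) : 0 ≤ sphInd d lam x := by
  unfold sphInd; split <;> norm_num

lemma sph_subset_box (d lam : ℕ) :
    sph d lam ⊆ ↑(Fintype.piFinset (fun _ : Fin d => Finset.Icc (-(lam:ℤ)) (lam:ℤ))) := by
  intro y hy
  simp only [Finset.mem_coe, Fintype.mem_piFinset, Finset.mem_Icc]
  intro i
  have h1 : (y i)^2 ≤ (lam:ℤ) := by
    rw [← hy]
    exact Finset.single_le_sum (fun j _ => sq_nonneg (y j)) (Finset.mem_univ i)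
  have h2 : |y i| ≤ (lam:ℤ) := by nlinarith [abs_nonneg (y i), sq_abs (y i)]
  exact abs_le.mp h2

lemma sph_finite (d lam : ℕ) : (sph d lam).Finite :=
  Set.Finite.subset (Fintype.piFinset _).finite_toSet (sph_subset_box d lam)

lemma Nlam_eq_card (d lam : ℕ) : Nlam d lam = (sph_finite d lam).toFinset.card :=
  Set.ncard_eq_toFinset_card _ _

lemma tsum_sphInd (d lam : ℕ) :
    ∑' y : Fin d → ℤ, ENNReal.ofReal (sphInd d lam y) = (Nlam d lam : ℝ≥0∞) := by
  have h := sph_finite d lam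
  rw [tsum_eq_sum (s := h.toFinset) (fun b hb => by
    simp only [Set.Finite.mem_toFinset] at hb
    simp [sphInd_eq_indicator, Set.indicator_apply, hb])]
  have : ∀ b ∈ h.toFinset, ENNReal.ofReal (sphInd d lam b) = (1:ℝ≥0∞) := by
    intro b hb
    simp only [Set.Finite.mem_toFinset] at hb
    simp [sphInd_eq_indicator, Set.indicator_apply, hb]
  rw [Finset.sum_congr rfl this, Finset.sum_const, Nlam_eq_card]
  simp

lemma sphInd_neg (d lam : ℕ) (x : Fin d → ℤ) : sphInd d lam (-x) = sphInd d lam x := by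
  simp [sphInd]

lemma sphInd_idem (d lam : ℕ) (x : Fin d → ℤ) :
    ENNReal.ofReal (sphInd d lam x) * ENNReal.ofReal (sphInd d lam x)
      = ENNReal.ofReal (sphInd d lam x) := by
  unfold sphInd; split <;> simp

lemma one_le_Lambda (d lam : ℕ) (h1 : Nlam d lam ≠ 0) :
    1 ≤ ΛP₂e d lam (sphInd d lam) (fun x => if x = 0 then 1 else 0) (sphInd d lam) := by
  set I : (Fin d → ℤ) → ℝ≥0∞ := fun y => ENNReal.ofReal (sphInd d lam y) with hI
  set N : ℝ≥0∞ := (Nlam d lam : ℝ≥0∞) with hNdef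
  have hN0 : N ≠ 0 := by simpa [hNdef] using h1
  have hNt : N ≠ ⊤ := by simp [hNdef]
  have key : N * N ≤ ∑' x₁, ∑' x₂, ∑' x₃,
      ENNReal.ofReal (sphInd d lam x₁) *
        ENNReal.ofReal ((fun x => if x = (0: Fin d → ℤ) then (1:ℝ) else 0) x₂) *
        ENNReal.ofReal (sphInd d lam x₃) *
        ENNReal.ofReal (sphInd d lam (x₁ - x₂)) * ENNReal.ofReal (sphInd d lam (x₂ - x₃)) := by
    have inner : ∀ x₁ : Fin d → ℤ, I x₁ * N ≤ ∑' x₂, ∑' x₃,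
        ENNReal.ofReal (sphInd d lam x₁) *
          ENNReal.ofReal ((fun x => if x = (0: Fin d → ℤ) then (1:ℝ) else 0) x₂) *
          ENNReal.ofReal (sphInd d lam x₃) *
          ENNReal.ofReal (sphInd d lam (x₁ - x₂)) * ENNReal.ofReal (sphInd d lam (x₂ - x₃)) := by
      intro x₁
      refine le_trans ?_ (ENNReal.le_tsum 0)
      have : ∀ x₃ : Fin d → ℤ,
          ENNReal.ofReal (sphInd d lam x₁) *
            ENNReal.ofReal ((fun x => if x = (0: Fin d → ℤ) then (1:ℝ) else 0) 0) *
            ENNReal.ofReal (sphInd d lam x₃) *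
            ENNReal.ofReal (sphInd d lam (x₁ - 0)) * ENNReal.ofReal (sphInd d lam (0 - x₃))
          = I x₁ * I x₃ := by
        intro x₃
        simp only [eq_self_iff_true, if_true, ENNReal.ofReal_one, mul_one, sub_zero, zero_sub,
          sphInd_neg]
        show I x₁ * I x₃ * I x₁ * I x₃ = I x₁ * I x₃
        calc I x₁ * I x₃ * I x₁ * I x₃ = (I x₁ * I x₁) * (I x₃ * I x₃) := by ring
        _ = I x₁ * I x₃ := by rw [sphInd_idem, sphInd_idem]
      rw [tsum_congr this, ENNReal.tsum_mul_left, tsum_sphInd]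
    calc N * N = ∑' x₁, I x₁ * N := by rw [ENNReal.tsum_mul_right, tsum_sphInd]
    _ ≤ _ := ENNReal.tsum_le_tsum inner
  have hsq : ENNReal.ofReal ((Nlam d lam : ℝ) ^ 2) = N * N := by
    rw [← Nat.cast_pow, ENNReal.ofReal_natCast, hNdef, pow_two, Nat.cast_mul]
  calc (1:ℝ≥0∞) = (N * N)⁻¹ * (N * N) := by
        rw [ENNReal.inv_mul_cancel (by simp [hN0, hNt, mul_eq_zero]) (by
          simp [ENNReal.mul_eq_top, hN0, hNt])]
  _ ≤ _ := by
        rw [ΛP₂e, hsq]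
        exact mul_le_mul_right key _

lemma eLpNorm_indicator_le_general {d : ℕ} {s : Set (Fin d → ℤ)} (hs : s.Finite) (p : ℝ≥0∞)
    (hp : 1 ≤ p) :
    eLpNorm (s.indicator (fun _ => (1:ℝ))) p Measure.count
      ≤ (hs.toFinset.card : ℝ≥0∞) ^ (1/p).toReal := by
  rcases eq_or_ne p ⊤ with hpt | hpt
  · subst hpt
    rw [eLpNorm_exponent_top]
    simp only [one_div, ENNReal.inv_top, ENNReal.toReal_zero, ENNReal.rpow_zero]
    exact le_trans (eLpNormEssSup_indicator_const_le _ _) (by norm_num)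
  · have hp0 : p ≠ 0 := by intro h; rw [h] at hp; exact (by simp : ¬ ((1:ℝ≥0∞) ≤ 0)) hp
    rw [eLpNorm_indicator_const (s.to_countable.measurableSet) hp0 hpt]
    rw [Measure.count_apply_finite _ hs]
    simp [one_div, ENNReal.toReal_inv]

lemma eLpNorm_sphInd_le (d lam : ℕ) (p : ℝ≥0∞) (hp : 1 ≤ p) :
    eLpNorm (sphInd d lam) p Measure.count ≤ (Nlam d lam : ℝ≥0∞) ^ (1/p).toReal := by
  rw [sphInd_eq_indicator, Nlam_eq_card]
  exact eLpNorm_indicator_le_general (sph_finite d lam) p hp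

lemma eLpNorm_delta_le (d : ℕ) (p : ℝ≥0∞) (hp : 1 ≤ p) :
    eLpNorm (fun x : Fin d → ℤ => if x = 0 then (1:ℝ) else 0) p Measure.count ≤ 1 := by
  have heq : (fun x : Fin d → ℤ => if x = 0 then (1:ℝ) else 0)
      = ({0} : Set (Fin d → ℤ)).indicator (fun _ => (1:ℝ)) := by
    funext x; simp [Set.indicator_apply]
  rw [heq]
  refine le_trans (eLpNorm_indicator_le_general (Set.finite_singleton _) p hp) ?_
  simp

lemma exists_small_sphere (d X : ℕ) (hX : 1 ≤ X) :
    ∃ lam : ℕ, X < lam ∧ lam ≤ 2*X ∧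
      (Nlam d lam : ℝ) ≤ ((2 * Nat.sqrt (2*X) + 1) ^ d : ℕ) / (X:ℝ) := by
  classical
  set m := Nat.sqrt (2*X) with hm
  set box := Fintype.piFinset (fun _ : Fin d => Finset.Icc (-(m:ℤ)) (m:ℤ)) with hbox
  set S : ℕ → Finset (Fin d → ℤ) := fun lam => (sph_finite d lam).toFinset with hS
  have hsub : ∀ lam ∈ Finset.Ioc X (2*X), S lam ⊆ box := by
    intro lam hlam y hy
    simp only [hS, Set.Finite.mem_toFinset] at hy
    simp only [Finset.mem_Ioc] at hlam
    simp only [hbox, Fintype.mem_piFinset, Finset.mem_Icc]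
    intro i
    have h1 : (y i)^2 ≤ (lam:ℤ) := by
      rw [← hy]
      exact Finset.single_le_sum (fun j _ => sq_nonneg (y j)) (Finset.mem_univ i)
    have h2 : ((y i).natAbs)^2 ≤ 2*X := by
      have : ((y i).natAbs : ℤ)^2 ≤ ((2*X : ℕ) : ℤ) := by
        rw [← sq_abs (y i)] at h1
        push_cast
        calc |y i|^2 ≤ (lam:ℤ) := by rwa [Int.abs_eq_natAbs] at h1 ⊢
        _ ≤ ((2*X : ℕ):ℤ) := by exact_mod_cast hlam.2
      exact_mod_cast this
    have h3 : (y i).natAbs ≤ m := by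
      rw [hm, Nat.le_sqrt]
      calc (y i).natAbs * (y i).natAbs = (y i).natAbs ^2 := (sq _).symm
      _ ≤ 2*X := h2
    have h4 : |y i| ≤ (m:ℤ) := by
      rw [Int.abs_eq_natAbs]; exact_mod_cast h3
    exact abs_le.mp h4
  have hdisj : ∀ a ∈ Finset.Ioc X (2*X), ∀ b ∈ Finset.Ioc X (2*X), a ≠ b →
      Disjoint (S a) (S b) := by
    intro a _ b _ hab
    rw [Finset.disjoint_left]
    intro y hya hyb
    simp only [hS, Set.Finite.mem_toFinset, sph, Set.mem_setOf_eq] at hya hyb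
    exact hab (by exact_mod_cast hya.symm.trans hyb)
  have hcard : ∑ lam ∈ Finset.Ioc X (2*X), (S lam).card ≤ (2*m+1)^d := by
    rw [← Finset.card_biUnion hdisj]
    calc ((Finset.Ioc X (2*X)).biUnion S).card ≤ box.card := by
          apply Finset.card_le_card
          intro y hy
          rw [Finset.mem_biUnion] at hy
          obtain ⟨lam, hlam, hylam⟩ := hy
          exact hsub lam hlam hylam
    _ = (2*m+1)^d := by
          rw [hbox, Fintype.card_piFinset]
          simp only [Int.card_Icc]
          rw [Finset.prod_const, Finset.card_univ, Fintype.card_fin]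
          congr 1
          omega
  by_contra hcon
  push_neg at hcon
  have hlt : ∀ lam ∈ Finset.Ioc X (2*X),
      (((2*m+1)^d : ℕ) : ℝ) / (X:ℝ) < ((S lam).card : ℝ) := by
    intro lam hlam
    simp only [Finset.mem_Ioc] at hlam
    have := hcon lam hlam.1 hlam.2
    rwa [Nlam_eq_card] at this
  have hsum : (((2*m+1)^d : ℕ) : ℝ) < ∑ lam ∈ Finset.Ioc X (2*X), ((S lam).card : ℝ) := by
    have hcardIoc : (Finset.Ioc X (2*X)).card = X := by
      rw [Nat.card_Ioc]; omega
    have hne : (Finset.Ioc X (2*X)).Nonempty := by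
      rw [← Finset.card_pos, hcardIoc]; omega
    calc (((2*m+1)^d : ℕ) : ℝ)
        = ∑ _lam ∈ Finset.Ioc X (2*X), (((2*m+1)^d : ℕ) : ℝ) / (X:ℝ) := by
          rw [Finset.sum_const, hcardIoc, nsmul_eq_mul]
          field_simp
    _ < _ := Finset.sum_lt_sum_of_nonempty hne hlt
  have : (∑ lam ∈ Finset.Ioc X (2*X), ((S lam).card : ℝ)) ≤ (((2*m+1)^d : ℕ) : ℝ) := by
    rw [← Nat.cast_sum]
    exact_mod_cast hcard
  linarith

lemma box_bound (d X : ℕ) (hX : 1 ≤ X) :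
    (((2 * Nat.sqrt (2*X) + 1) ^ d : ℕ) : ℝ) / (X:ℝ)
      ≤ ((3:ℝ)^d * 2^((d:ℝ)/2)) * (X:ℝ) ^ (((d:ℝ)-2)/2) := by
  have hX0 : (0:ℝ) < X := by exact_mod_cast hX
  have hX1 : (1:ℝ) ≤ (X:ℝ) := by exact_mod_cast hX
  have h2X : (1:ℝ) ≤ 2*(X:ℝ) := by linarith
  have hm : ((Nat.sqrt (2*X) : ℕ):ℝ) ≤ Real.sqrt (2*(X:ℝ)) := by
    rw [Real.le_sqrt (by positivity) (by positivity)]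
    have h := Nat.sqrt_le' (2*X)
    have h' : ((Nat.sqrt (2*X) ^ 2 : ℕ) : ℝ) ≤ ((2*X : ℕ) : ℝ) := by exact_mod_cast h
    push_cast at h'
    convert h' using 2
  have hsq1 : (1:ℝ) ≤ Real.sqrt (2*(X:ℝ)) := Real.one_le_sqrt.mpr h2X
  have hnum : (((2 * Nat.sqrt (2*X) + 1) ^ d : ℕ) : ℝ)
      ≤ (3 * Real.sqrt (2*(X:ℝ)))^d := by
    push_cast
    apply pow_le_pow_left₀ (by positivity)
    nlinarith
  have hsqd : (Real.sqrt (2*(X:ℝ)))^d = (2*(X:ℝ)) ^ ((d:ℝ)/2) := by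
    rw [Real.sqrt_eq_rpow, ← Real.rpow_natCast ((2*(X:ℝ)) ^ ((1:ℝ)/2)) d,
      ← Real.rpow_mul (by positivity)]
    ring_nf
  have hXsplit : (2*(X:ℝ)) ^ ((d:ℝ)/2) = 2^((d:ℝ)/2) * (X:ℝ)^((d:ℝ)/2) :=
    Real.mul_rpow (by norm_num) (le_of_lt hX0)
  have hdiv : (X:ℝ)^((d:ℝ)/2) / X = (X:ℝ)^(((d:ℝ)-2)/2) := by
    rw [show ((d:ℝ)-2)/2 = (d:ℝ)/2 - 1 by ring, Real.rpow_sub hX0, Real.rpow_one]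
  calc (((2 * Nat.sqrt (2*X) + 1) ^ d : ℕ) : ℝ) / (X:ℝ)
      ≤ (3 * Real.sqrt (2*(X:ℝ)))^d / X := by gcongr
  _ = (3^d * 2^((d:ℝ)/2)) * ((X:ℝ)^((d:ℝ)/2) / X) := by
        rw [mul_pow, hsqd, hXsplit]; ring
  _ = _ := by rw [hdiv]

set_option maxHeartbeats 2000000

/-- a necessary condition for the sharp-exponent `ℓ^p` improving bound
for the 2-chain form. -/
theorem lambdaP2_necessary_condition (d : ℕ) (p₁ p₂ p₃ : ℝ≥0∞)
    (hp₁ : 1 ≤ p₁) (hp₂ : 1 ≤ p₂) (hp₃ : 1 ≤ p₃)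
    (C : ℝ≥0∞) (hC : C ≠ ⊤) (c : ℝ) (hc : 0 < c) (lam₀ : ℕ)
    (hN : ∀ lam ≥ lam₀, c * (lam : ℝ) ^ (((d : ℝ) - 2) / 2) ≤ (Nlam d lam : ℝ))
    (hbound : ∀ lam ≥ lam₀, ∀ f₁ f₂ f₃ : (Fin d → ℤ) → ℝ,
      (∀ x, 0 ≤ f₁ x) → (∀ x, 0 ≤ f₂ x) → (∀ x, 0 ≤ f₃ x) →
      ΛP₂e d lam f₁ f₂ f₃ ≤
        C * (lam : ℝ≥0∞) ^
            (((d : ℝ) / 2) * (1 - (1 / p₁).toReal - (1 / p₂).toReal - (1 / p₃).toReal)) *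
          eLpNorm f₁ p₁ Measure.count * eLpNorm f₂ p₂ Measure.count *
          eLpNorm f₃ p₃ Measure.count) :
    (2 / (d : ℝ)) * ((1 / p₁).toReal + (1 / p₃).toReal) + (1 / p₂).toReal ≤ 1 := by
  by_contra hcon
  push_neg at hcon
  set b1 := (1/p₁).toReal with hb1
  set b2 := (1/p₂).toReal with hb2
  set b3 := (1/p₃).toReal with hb3
  have hb1n : 0 ≤ b1 := ENNReal.toReal_nonneg
  have hb2n : 0 ≤ b2 := ENNReal.toReal_nonneg
  have hb3n : 0 ≤ b3 := ENNReal.toReal_nonneg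
  have hb2le : b2 ≤ 1 := by
    rw [hb2]
    have h : (1/p₂ : ℝ≥0∞) ≤ 1 := by rw [one_div]; exact ENNReal.inv_le_one.mpr hp₂
    simpa using ENNReal.toReal_mono one_ne_top h
  rcases Nat.eq_zero_or_pos d with hd0 | hdpos
  · subst hd0
    simp only [Nat.cast_zero, div_zero, zero_mul, zero_add] at hcon
    linarith
  have hd1 : (1:ℝ) ≤ (d:ℝ) := by exact_mod_cast hdpos
  set α := ((d:ℝ)/2) * (1 - b1 - b2 - b3) with hα
  set e := (((d:ℝ)-2)/2) with he
  set δ := α + (b1 + b3) * e with hδdef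
  have hδ : δ < 0 := by
    have hd0' : (d:ℝ) ≠ 0 := by linarith
    have h3 : (d:ℝ)/2 * (1 - b2) < (d:ℝ)/2 * ((2/(d:ℝ)) * (b1+b3)) := by
      apply mul_lt_mul_of_pos_left _ (by linarith : (0:ℝ) < (d:ℝ)/2)
      linarith
    have h2 : (d:ℝ)/2 * ((2/(d:ℝ)) * (b1+b3)) = b1 + b3 := by field_simp
    rw [h2] at h3
    have : δ = (d:ℝ)/2 * (1-b2) - (b1+b3) := by rw [hδdef, hα, he]; ring
    linarith
  set A := (3:ℝ)^d * 2^((d:ℝ)/2) with hA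
  have hApos : 0 < A := by positivity
  set Cr := C.toReal with hCr
  have hCrn : 0 ≤ Cr := ENNReal.toReal_nonneg
  set M := Cr * 2^|α| * A^b1 * A^b3 with hM
  have hMn : 0 ≤ M := by positivity
  -- key inequality for every large X
  have key : ∀ X : ℕ, lam₀ ≤ X → 1 ≤ X → (1:ℝ) ≤ M * (X:ℝ)^δ := by
    intro X hXlam₀ hX1
    obtain ⟨lam, hXlt, hlam2X, hNbd⟩ := exists_small_sphere d X hX1
    have hlamge : lam₀ ≤ lam := le_trans hXlam₀ (le_of_lt hXlt)
    have hlam1 : 1 ≤ lam := le_trans hX1 (le_of_lt hXlt)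
    have hXpos : (0:ℝ) < X := by exact_mod_cast hX1
    have hlampos : (0:ℝ) < lam := by exact_mod_cast hlam1
    -- N is positive
    have hNne : Nlam d lam ≠ 0 := by
      intro h0
      have := hN lam hlamge
      rw [h0] at this
      have : c * (lam:ℝ) ^ (((d:ℝ)-2)/2) ≤ 0 := by simpa using this
      nlinarith [Real.rpow_pos_of_pos hlampos (((d:ℝ)-2)/2)]
    -- apply hbound with test functions
    have hb := hbound lam hlamge (sphInd d lam) (fun x => if x = 0 then 1 else 0) (sphInd d lam)
      (sphInd_nonneg d lam) (fun x => by split <;> norm_num) (sphInd_nonneg d lam)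
    set Nm : ℝ≥0∞ := (Nlam d lam : ℝ≥0∞) with hNm
    have hRine : (1:ℝ≥0∞) ≤ C * (lam:ℝ≥0∞)^α * Nm^b1 * Nm^b3 := by
      refine le_trans (one_le_Lambda d lam hNne) (le_trans hb ?_)
      have m1 : eLpNorm (sphInd d lam) p₁ Measure.count ≤ Nm^b1 := eLpNorm_sphInd_le d lam p₁ hp₁
      have m2 : eLpNorm (fun x : Fin d → ℤ => if x = 0 then (1:ℝ) else 0) p₂ Measure.count ≤ 1 :=
        eLpNorm_delta_le d p₂ hp₂
      have m3 : eLpNorm (sphInd d lam) p₃ Measure.count ≤ Nm^b3 := eLpNorm_sphInd_le d lam p₃ hp₃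
      calc C * (lam:ℝ≥0∞)^α * eLpNorm (sphInd d lam) p₁ Measure.count *
            eLpNorm (fun x : Fin d → ℤ => if x = 0 then (1:ℝ) else 0) p₂ Measure.count *
            eLpNorm (sphInd d lam) p₃ Measure.count
          ≤ C * (lam:ℝ≥0∞)^α * (Nm^b1) * 1 * (Nm^b3) := by gcongr
      _ = C * (lam:ℝ≥0∞)^α * Nm^b1 * Nm^b3 := by rw [mul_one]
    -- finiteness
    have hlamne : ((lam:ℝ≥0∞)) ≠ 0 := Nat.cast_ne_zero.mpr (by omega)
    have hLne : ((lam:ℝ≥0∞))^α ≠ ⊤ := by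
      simp only [ne_eq, ENNReal.rpow_eq_top_iff]
      push_neg
      exact ⟨fun h => absurd h hlamne, fun h => absurd h (ENNReal.natCast_ne_top lam)⟩
    have hN1ne : Nm^b1 ≠ ⊤ := by
      simp only [hNm, ne_eq, ENNReal.rpow_eq_top_iff]
      push_neg
      exact ⟨fun _ => by linarith, fun h => absurd h (ENNReal.natCast_ne_top _)⟩
    have hN3ne : Nm^b3 ≠ ⊤ := by
      simp only [hNm, ne_eq, ENNReal.rpow_eq_top_iff]
      push_neg
      exact ⟨fun _ => by linarith, fun h => absurd h (ENNReal.natCast_ne_top _)⟩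
    have hRne : C * (lam:ℝ≥0∞)^α * Nm^b1 * Nm^b3 ≠ ⊤ :=
      ENNReal.mul_ne_top (ENNReal.mul_ne_top (ENNReal.mul_ne_top hC hLne) hN1ne) hN3ne
    -- pass to real numbers
    have hRreal : (1:ℝ) ≤ Cr * (lam:ℝ)^α * ((Nlam d lam : ℝ))^b1 * ((Nlam d lam : ℝ))^b3 := by
      have h0 := ENNReal.toReal_mono hRne hRine
      rw [ENNReal.toReal_one, ENNReal.toReal_mul, ENNReal.toReal_mul, ENNReal.toReal_mul,
        ← ENNReal.toReal_rpow, ← ENNReal.toReal_rpow, ← ENNReal.toReal_rpow, hNm] at h0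
      exact_mod_cast h0
    -- bound lam^α by X^α
    have hXα : (lam:ℝ)^α ≤ 2^|α| * (X:ℝ)^α := by
      have hXαpos : (0:ℝ) < (X:ℝ)^α := Real.rpow_pos_of_pos hXpos α
      rcases le_or_gt 0 α with hα0 | hα0
      · calc (lam:ℝ)^α ≤ (2*(X:ℝ))^α := by
              apply Real.rpow_le_rpow (le_of_lt hlampos) _ hα0
              exact_mod_cast hlam2X
        _ = 2^α * (X:ℝ)^α := Real.mul_rpow (by norm_num) (le_of_lt hXpos)
        _ ≤ 2^|α| * (X:ℝ)^α := by
              have : (2:ℝ)^α ≤ 2^|α| :=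
                Real.rpow_le_rpow_of_exponent_le (by norm_num) (le_abs_self α)
              nlinarith
      · have h1 : (lam:ℝ)^α ≤ (X:ℝ)^α := by
          apply Real.rpow_le_rpow_of_nonpos hXpos _ (le_of_lt hα0)
          exact_mod_cast le_of_lt hXlt
        have h2 : (1:ℝ) ≤ 2^|α| := by
          rw [show (1:ℝ) = 2^(0:ℝ) by rw [Real.rpow_zero]]
          exact Real.rpow_le_rpow_of_exponent_le (by norm_num) (abs_nonneg α)
        nlinarith
    -- bound N by A * X^e
    have hNA : ((Nlam d lam : ℝ)) ≤ A * (X:ℝ)^e := by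
      rw [hA, he]
      exact le_trans hNbd (box_bound d X hX1)
    have hAXpos : (0:ℝ) < A * (X:ℝ)^e := by
      have := Real.rpow_pos_of_pos hXpos e
      positivity
    have hn1 : ((Nlam d lam : ℝ))^b1 ≤ (A * (X:ℝ)^e)^b1 :=
      Real.rpow_le_rpow (Nat.cast_nonneg _) hNA hb1n
    have hn3 : ((Nlam d lam : ℝ))^b3 ≤ (A * (X:ℝ)^e)^b3 :=
      Real.rpow_le_rpow (Nat.cast_nonneg _) hNA hb3n
    have hchain : (1:ℝ) ≤ Cr * (2^|α| * (X:ℝ)^α) * ((A * (X:ℝ)^e)^b1) * ((A * (X:ℝ)^e)^b3) := by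
      refine le_trans hRreal ?_
      gcongr
      all_goals first | exact hXα | exact hn1 | exact hn3
    -- now rewrite RHS as M * X^δ
    have hXe : (0:ℝ) ≤ (X:ℝ)^e := le_of_lt (Real.rpow_pos_of_pos hXpos e)
    have hExp1 : (A * (X:ℝ)^e)^b1 = A^b1 * (X:ℝ)^(e*b1) := by
      rw [Real.mul_rpow (le_of_lt hApos) hXe, ← Real.rpow_mul (le_of_lt hXpos)]
    have hExp3 : (A * (X:ℝ)^e)^b3 = A^b3 * (X:ℝ)^(e*b3) := by
      rw [Real.mul_rpow (le_of_lt hApos) hXe, ← Real.rpow_mul (le_of_lt hXpos)]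
    have hXδ : (X:ℝ)^δ = (X:ℝ)^α * ((X:ℝ)^(e*b1) * (X:ℝ)^(e*b3)) := by
      rw [show δ = α + (e*b1 + e*b3) by rw [hδdef]; ring, Real.rpow_add hXpos,
        Real.rpow_add hXpos]
    have hfinal : Cr * (2^|α| * (X:ℝ)^α) * (A^b1 * (X:ℝ)^(e*b1)) * (A^b3 * (X:ℝ)^(e*b3))
        = M * (X:ℝ)^δ := by
      rw [hM, hXδ]; ring
    rw [hExp1, hExp3, hfinal] at hchain
    exact hchain
  -- choose X large and derive a contradiction
  set X := max (max lam₀ 1) (Nat.ceil ((M+1) ^ (1/(-δ)))) with hX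
  have hXlam₀ : lam₀ ≤ X := le_trans (le_max_left _ _) (le_max_left _ _)
  have hX1 : 1 ≤ X := le_trans (le_max_right _ _) (le_max_left _ _)
  have hXpos : (0:ℝ) < X := by exact_mod_cast hX1
  have hkey := key X hXlam₀ hX1
  have hXc : ((M+1) ^ (1/(-δ)) : ℝ) ≤ (X:ℝ) := by
    refine le_trans (Nat.le_ceil _) ?_
    exact_mod_cast le_max_right (max lam₀ 1) (Nat.ceil ((M+1) ^ (1/(-δ))))
  have hδpos : (0:ℝ) < -δ := neg_pos.mpr hδ
  have hM1 : (0:ℝ) < M + 1 := by linarith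
  have h2 : M + 1 ≤ (X:ℝ)^(-δ) := by
    calc M + 1 = ((M+1) ^ (1/(-δ)))^(-δ) := by
          rw [← Real.rpow_mul (le_of_lt hM1), one_div, inv_mul_cancel₀ (ne_of_gt hδpos),
            Real.rpow_one]
    _ ≤ (X:ℝ)^(-δ) := Real.rpow_le_rpow (by positivity) hXc (le_of_lt hδpos)
  have h3 : (X:ℝ)^(-δ) ≤ M := by
    have hmul := mul_le_mul_of_nonneg_right hkey
      (le_of_lt (Real.rpow_pos_of_pos hXpos (-δ)))
    rw [one_mul, mul_assoc, ← Real.rpow_add hXpos, add_neg_cancel, Real.rpow_zero,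
      mul_one] at hmul
    exact hmul
  linarith
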